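/- Let 𝒞 be a conic in the real projective plane, given as the zero locus of a nondegenerate quadratic form on ℝ³. Let ABC and A'B'C' be two triangles inscribed in 𝒞 (each triple noncollinear, the six points pairwise distinct) such that ABC is perspective with A'B'C' with perspector P (lines AA', BB', CC' pass through P) and ABC is perspective with B'C'A' with perspector Q (lines AB', BC', CA' pass through Q), with P ≠ Q. Let A''B''C'' be a further triangle inscribed in 𝒞 (noncollinear, its vertices distinct from A, B, C) such that ABC is perspective with A''B''C'' with perspector S (lines AA'', BB'', CC'' pass through S) for some point S on the line PQ. Then there exist points T and U on the line PQ such that ABC is perspective with B''C''A'' with perspector T (lines AB'', BC'', CA'' pass through T) and ABC is perspective with C''A''B'' with perspector U (lines AC'', BA'', CB'' pass through U). -/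

import Mathlib

open Matrix

/-- Three points of the real projective plane are collinear if (some, equivalently any)
homogeneous representatives of them are linearly dependent. -/
def Collin (X Y Z : Projectivization ℝ (Fin 3 → ℝ)) : Prop :=
  ¬ LinearIndependent ℝ ![X.rep, Y.rep, Z.rep]

/-- A point of the real projective plane lies on the conic cut out by the quadratic form `q`. -/
def OnConic (q : QuadraticForm ℝ (Fin 3 → ℝ)) (X : Projectivization ℝ (Fin 3 → ℝ)) : Prop :=
  q X.rep = 0

noncomputable section ConicAux

def Rmat (v : Fin 2 → ℝ) : Matrix (Fin 2) (Fin 2) ℝ :=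
  !![-(v 0 * v 1), v 0 ^ 2; -(v 1 ^ 2), v 0 * v 1]

def dlt (v w : Fin 2 → ℝ) : ℝ := v 0 * w 1 - v 1 * w 0

lemma Rmat_mulVec (v w : Fin 2 → ℝ) : Rmat v *ᵥ w = dlt v w • v := by
  funext i
  fin_cases i <;>
    · simp [Rmat, dlt, Matrix.mulVec, dotProduct, Fin.sum_univ_two]
      ring

lemma dlt_self (v : Fin 2 → ℝ) : dlt v v = 0 := by unfold dlt; ring

lemma Rmat_smul (μ : ℝ) (v : Fin 2 → ℝ) : Rmat (μ • v) = μ ^ 2 • Rmat v := by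
  ext i j
  fin_cases i <;> fin_cases j <;>
    · simp [Rmat]
      ring

lemma struct (M : Matrix (Fin 2) (Fin 2) ℝ) (h0 : M ≠ 0) (htr : M 1 1 = -(M 0 0))
    (hdet : M.det = 0) : ∃ (v : Fin 2 → ℝ) (c : ℝ), v ≠ 0 ∧ c ≠ 0 ∧ M = c • Rmat v := by
  rw [Matrix.det_fin_two, htr] at hdet
  by_cases hn : M 0 1 ≠ 0
  · refine ⟨![M 0 1, -(M 0 0)], (M 0 1)⁻¹, ?_, by simpa using hn, ?_⟩
    · intro h; apply hn; have := congrFun h 0; simpa using this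
    · ext i j
      fin_cases i <;> fin_cases j
      · show M 0 0 = _ * _
        simp [Rmat]
        field_simp
      · show M 0 1 = _ * _
        simp [Rmat]
        field_simp
      · show M 1 0 = _ * _
        simp [Rmat]
        field_simp
        linear_combination -hdet
      · show M 1 1 = _ * _
        simp [Rmat, htr]
        field_simp
  · push_neg at hn
    have hm : M 0 0 = 0 := by
      rw [hn] at hdet
      have h2 : M 0 0 ^ 2 = 0 := by linarith [hdet]
      exact pow_eq_zero_iff (by norm_num) |>.mp h2
    have hp : M 1 0 ≠ 0 := by
      intro h; apply h0; ext i j; fin_cases i <;> fin_cases j <;>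
        simp [hn, hm, htr, h]
    refine ⟨![0, 1], -(M 1 0), ?_, by simpa using hp, ?_⟩
    · intro h; have := congrFun h 1; simpa using this
    · ext i j
      fin_cases i <;> fin_cases j
      · show M 0 0 = _ * _
        simp [Rmat, hm]
      · show M 0 1 = _ * _
        simp [Rmat, hn]
      · show M 1 0 = _ * _
        simp [Rmat]
      · show M 1 1 = _ * _
        simp [Rmat, htr, hm]

lemma killer (M : Matrix (Fin 2) (Fin 2) ℝ) (a : Fin 2 → ℝ) (ha : a ≠ 0)
    (htr : M 1 1 = -(M 0 0)) (hkill : M *ᵥ a = 0) : ∃ α : ℝ, M = α • Rmat a := by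
  have h0 := congrFun hkill 0
  have h1 := congrFun hkill 1
  simp [Matrix.mulVec, dotProduct, Fin.sum_univ_two] at h0 h1
  by_cases ha0 : a 0 ≠ 0
  · have hpow : (a 0 : ℝ) ^ 2 ≠ 0 := pow_ne_zero 2 ha0
    refine ⟨M 0 1 / (a 0) ^ 2, ?_⟩
    ext i j
    fin_cases i <;> fin_cases j
    · show M 0 0 = _ * _
      simp [Rmat]
      field_simp
      linear_combination h0
    · show M 0 1 = _ * _
      simp [Rmat]
      field_simp
    · show M 1 0 = _ * _
      simp [Rmat]
      field_simp
      linear_combination a 0 * h1 - a 0 * a 1 * htr + a 1 * h0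
    · show M 1 1 = _ * _
      simp [Rmat]
      field_simp
      linear_combination a 0 * htr - h0
  · push_neg at ha0
    have ha1 : a 1 ≠ 0 := by
      intro h; apply ha; funext i; fin_cases i <;> simp [ha0, h]
    rw [ha0] at h0 h1
    simp at h0 h1
    have hn : M 0 1 = 0 := by
      rcases h0 with h | h
      · exact h
      · exact absurd h ha1
    have hm : M 1 1 = 0 := by
      rcases h1 with h | h
      · exact h
      · exact absurd h ha1
    refine ⟨-(M 1 0) / (a 1) ^ 2, ?_⟩
    have hm0 : M 0 0 = 0 := by rw [hm] at htr; linarith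
    ext i j
    fin_cases i <;> fin_cases j
    · show M 0 0 = _ * _
      simp [Rmat, ha0, hm0]
    · show M 0 1 = _ * _
      simp [Rmat, ha0, hn]
    · show M 1 0 = _ * _
      simp [Rmat, ha0]
      field_simp
    · show M 1 1 = _ * _
      simp [Rmat, ha0, hm]

lemma det_comb (x y : ℝ) (v w : Fin 2 → ℝ) :
    (x • Rmat v + y • Rmat w).det = x * y * (dlt v w) ^ 2 := by
  simp [Matrix.det_fin_two, Rmat, dlt]
  ring

lemma keyspan (X Y : Matrix (Fin 2) (Fin 2) ℝ) (hX : X 1 1 = -(X 0 0))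
    (hY : Y 1 1 = -(Y 0 0)) (α β : ℝ) :
    (α • X + β • Y) * X * Y =
      (β * Y.det) • X + (β * ((X * Y).trace) - α * X.det) • Y := by
  ext i j
  fin_cases i <;> fin_cases j <;>
    · simp [Matrix.mul_apply, Fin.sum_univ_two, Matrix.trace_fin_two,
        Matrix.det_fin_two, hX, hY]
      ring

lemma parallel_of_dlt (v w : Fin 2 → ℝ) (hv : v ≠ 0) (h : dlt v w = 0) :
    ∃ μ : ℝ, w = μ • v := by
  unfold dlt at h
  by_cases hv0 : v 0 ≠ 0
  · refine ⟨w 0 / v 0, ?_⟩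
    funext i
    fin_cases i
    · show w 0 = (w 0 / v 0) * v 0
      field_simp
    · show w 1 = (w 0 / v 0) * v 1
      field_simp
      first
      | linear_combination h
      | linear_combination -h
      | linear_combination 2 * h
      | linear_combination -2 * h
  · push_neg at hv0
    have hv1 : v 1 ≠ 0 := by
      intro h1; apply hv; funext i; fin_cases i <;> simp [hv0, h1]
    have hw0 : w 0 = 0 := by
      rw [hv0] at h
      simp at h
      rcases h with h | h
      · exact absurd h hv1
      · exact h
    refine ⟨w 1 / v 1, ?_⟩
    funext i
    fin_cases i
    · show w 0 = (w 1 / v 1) * v 0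
      rw [hw0, hv0, mul_zero]
    · show w 1 = (w 1 / v 1) * v 1
      field_simp

lemma both_zero (a b : Fin 2 → ℝ) (c d : ℝ) (h : c • a = d • b) (hd : dlt a b ≠ 0) :
    c = 0 ∧ d = 0 := by
  have h0 := congrFun h 0
  have h1 := congrFun h 1
  simp only [Pi.smul_apply, smul_eq_mul] at h0 h1
  unfold dlt at hd
  constructor
  · by_contra hc
    apply hd
    have hcc : c * (a 0 * b 1 - a 1 * b 0) = 0 := by
      linear_combination b 1 * h0 - b 0 * h1
    rcases mul_eq_zero.mp hcc with h | h
    · exact absurd h hc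
    · exact h
  · by_contra hcd
    apply hd
    have hdd : d * (a 0 * b 1 - a 1 * b 0) = 0 := by
      linear_combination a 1 * h0 - a 0 * h1
    rcases mul_eq_zero.mp hdd with h | h
    · exact absurd h hcd
    · exact h

section ModuleLemmas
variable {M : Type*} [AddCommGroup M] [Module ℝ M]

lemma dep_of_comb (u v w : M) (x y : ℝ) (h : w = x • u + y • v) :
    ¬ LinearIndependent ℝ ![u, v, w] := by
  rw [Fintype.not_linearIndependent_iff]
  refine ⟨![x, y, -1], ?_, ⟨2, by simp⟩⟩
  simp [Fin.sum_univ_three, h]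
  abel

lemma comb_of_dep (u v w : M) (hdep : ¬ LinearIndependent ℝ ![u, v, w])
    (hp : LinearIndependent ℝ ![u, v]) : ∃ x y : ℝ, w = x • u + y • v := by
  rw [Fintype.not_linearIndependent_iff] at hdep
  obtain ⟨g, hsum, i, hi⟩ := hdep
  simp only [Fin.sum_univ_three, Matrix.cons_val_zero, Matrix.cons_val_one,
    Matrix.head_cons, Matrix.cons_val_two, Matrix.tail_cons] at hsum
  by_cases hg2 : g 2 = 0
  · exfalso
    rw [hg2, zero_smul, add_zero] at hsum
    have hz := Fintype.linearIndependent_iff.mp hp ![g 0, g 1] (by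
      simpa [Fin.sum_univ_two] using hsum)
    fin_cases i
    · exact hi (by simpa using hz 0)
    · exact hi (by simpa using hz 1)
    · exact hi hg2
  · refine ⟨-(g 0) / g 2, -(g 1) / g 2, ?_⟩
    have h2 : g 2 • w = (-(g 0)) • u + (-(g 1)) • v := by
      linear_combination (norm := module) hsum
    have h3 : w = (g 2)⁻¹ • (g 2 • w) := by
      rw [smul_smul, inv_mul_cancel₀ hg2, one_smul]
    rw [h3, h2, smul_add, smul_smul, smul_smul, div_eq_inv_mul, div_eq_inv_mul]

lemma pair_not_indep_of_smul (u v : M) (k : ℝ) (h : v = k • u) :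
    ¬ LinearIndependent ℝ ![u, v] := by
  rw [Fintype.not_linearIndependent_iff]
  refine ⟨![k, -1], ?_, ⟨1, by norm_num⟩⟩
  simp [Fin.sum_univ_two, h]

end ModuleLemmas

lemma dlt_ne_of_indep (M₁ M₂ : Matrix (Fin 2) (Fin 2) ℝ) (v w : Fin 2 → ℝ)
    (c₁ c₂ : ℝ) (h₁ : M₁ = c₁ • Rmat v) (h₂ : M₂ = c₂ • Rmat w)
    (hc₁ : c₁ ≠ 0) (hv : v ≠ 0)
    (hInd : LinearIndependent ℝ ![M₁, M₂]) : dlt v w ≠ 0 := by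
  intro hd
  obtain ⟨μ, hμ⟩ := parallel_of_dlt v w hv hd
  apply pair_not_indep_of_smul M₁ M₂ (c₂ * μ ^ 2 / c₁) _ hInd
  rw [h₂, hμ, Rmat_smul, h₁]
  rw [smul_smul, smul_smul]
  congr 1
  field_simp
  try ring

lemma span_of_mulVec (Mx : Matrix (Fin 2) (Fin 2) ℝ) (a w : Fin 2 → ℝ) (κ : ℝ)
    (htr : Mx 1 1 = -(Mx 0 0)) (h : Mx *ᵥ a = κ • w) (hd : dlt w a ≠ 0) :
    ∃ x y : ℝ, Mx = x • Rmat a + y • Rmat w := by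
  have ha : a ≠ 0 := by
    intro h0; apply hd; rw [h0]; unfold dlt; simp
  set M' := Mx - (κ / dlt w a) • Rmat w with hM'
  have htr' : M' 1 1 = -(M' 0 0) := by
    first
    | (simp [hM', Rmat, htr]; ring)
    | simp [hM', Rmat, htr]
  have hkill : M' *ᵥ a = 0 := by
    rw [hM', Matrix.sub_mulVec, Matrix.smul_mulVec, Rmat_mulVec, h,
      smul_smul, div_mul_cancel₀ _ hd, sub_self]
  obtain ⟨α, hα⟩ := killer M' a ha htr' hkill
  refine ⟨α, κ / dlt w a, ?_⟩
  have hMx : Mx = M' + (κ / dlt w a) • Rmat w := by rw [hM']; abel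
  rw [hMx, hα]

lemma dlt_swap_ne {v w : Fin 2 → ℝ} (h : dlt v w ≠ 0) : dlt w v ≠ 0 := by
  intro h0; apply h; unfold dlt at *; linarith

lemma comb_mulVec (α β : ℝ) (v w u : Fin 2 → ℝ) :
    (α • Rmat v + β • Rmat w) *ᵥ u = (α * dlt v u) • v + (β * dlt w u) • w := by
  rw [Matrix.add_mulVec, Matrix.smul_mulVec, Matrix.smul_mulVec,
    Rmat_mulVec, Rmat_mulVec, smul_smul, smul_smul]

lemma tri_chain (M1 M2 M3 : Matrix (Fin 2) (Fin 2) ℝ) (a u1 u2 u3 : Fin 2 → ℝ)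
    (c1 d1 c2 d2 c3 d3 : ℝ)
    (h3 : M3 = c3 • Rmat a + d3 • Rmat u1)
    (h2 : M2 = c2 • Rmat u2 + d2 • Rmat u1)
    (h1 : M1 = c1 • Rmat u2 + d1 • Rmat u3) :
    ∃ κ : ℝ, (M1 * M2 * M3) *ᵥ a = κ • u3 := by
  refine ⟨(d3 * dlt u1 a) * ((c2 * dlt u2 u1) * (d1 * dlt u3 u2)), ?_⟩
  rw [← Matrix.mulVec_mulVec, ← Matrix.mulVec_mulVec]
  rw [h3, comb_mulVec, dlt_self, mul_zero, zero_smul, zero_add]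
  rw [Matrix.mulVec_smul, h2, comb_mulVec, dlt_self, mul_zero, zero_smul, add_zero]
  rw [Matrix.mulVec_smul, Matrix.mulVec_smul, h1, comb_mulVec, dlt_self, mul_zero,
    zero_smul, zero_add, smul_smul, smul_smul, mul_assoc]

lemma det_ne_of_two_spans (Mx : Matrix (Fin 2) (Fin 2) ℝ) (v1 w1 v2 w2 : Fin 2 → ℝ)
    (α1 β1 α2 β2 : ℝ)
    (h1 : Mx = α1 • Rmat v1 + β1 • Rmat w1)
    (h2 : Mx = α2 • Rmat v2 + β2 • Rmat w2)
    (hMne : Mx ≠ 0)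
    (hd11 : dlt v1 w1 ≠ 0)
    (hv1v2 : dlt v1 v2 ≠ 0)
    (hv1w2 : dlt v1 w2 ≠ 0)
    (hw1v2 : dlt w1 v2 ≠ 0)
    (hw1w2 : dlt w1 w2 ≠ 0) : Mx.det ≠ 0 := by
  intro h0
  rw [h1, det_comb] at h0
  have hev : Mx *ᵥ v2 = (α2 * dlt v2 v2) • v2 + (β2 * dlt w2 v2) • w2 := by
    rw [h2, comb_mulVec]
  rw [dlt_self, mul_zero, zero_smul, zero_add] at hev
  have hev1 : Mx *ᵥ v2 = (α1 * dlt v1 v2) • v1 + (β1 * dlt w1 v2) • w1 := by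
    rw [h1, comb_mulVec]
  have hd2 : (dlt v1 w1) ^ 2 ≠ 0 := pow_ne_zero 2 hd11
  have hab : α1 * β1 = 0 := by
    by_contra hab
    exact (mul_ne_zero hab hd2) h0
  rcases mul_eq_zero.mp hab with ha | hb
  · rw [ha, zero_mul, zero_smul, zero_add] at hev1
    have heq : (β1 * dlt w1 v2) • w1 = (β2 * dlt w2 v2) • w2 := by
      rw [← hev1, ← hev]
    have hz := (both_zero _ _ _ _ heq hw1w2).1
    have hβ1 : β1 = 0 := by
      rcases mul_eq_zero.mp hz with h | h
      · exact h
      · exact absurd h hw1v2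
    apply hMne
    rw [h1, ha, hβ1, zero_smul, zero_smul, add_zero]
  · rw [hb, zero_mul, zero_smul, add_zero] at hev1
    have heq : (α1 * dlt v1 v2) • v1 = (β2 * dlt w2 v2) • w2 := by
      rw [← hev1, ← hev]
    have hz := (both_zero _ _ _ _ heq hv1w2).1
    have hα1 : α1 = 0 := by
      rcases mul_eq_zero.mp hz with h | h
      · exact h
      · exact absurd h hv1v2
    apply hMne
    rw [h1, hα1, hb, zero_smul, zero_smul, add_zero]

end ConicAux

set_option maxHeartbeats 3000000 in
theorem perspector_on_line_implies_triply_perspective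
    (q : QuadraticForm ℝ (Fin 3 → ℝ))
    (hq : LinearMap.BilinForm.Nondegenerate (QuadraticMap.polarBilin q))
    (A B C A' B' C' : Projectivization ℝ (Fin 3 → ℝ))
    (hA : OnConic q A) (hB : OnConic q B) (hC : OnConic q C)
    (hA' : OnConic q A') (hB' : OnConic q B') (hC' : OnConic q C')
    (hABC : ¬ Collin A B C) (hA'B'C' : ¬ Collin A' B' C')
    (hdistinct : List.Pairwise (· ≠ ·) [A, B, C, A', B', C'])
    (P Q : Projectivization ℝ (Fin 3 → ℝ)) (hPQ : P ≠ Q)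
    (hP : Collin A A' P ∧ Collin B B' P ∧ Collin C C' P)
    (hQ : Collin A B' Q ∧ Collin B C' Q ∧ Collin C A' Q)
    (A'' B'' C'' : Projectivization ℝ (Fin 3 → ℝ))
    (hA'' : OnConic q A'') (hB'' : OnConic q B'') (hC'' : OnConic q C'')
    (hA''B''C'' : ¬ Collin A'' B'' C'')
    (hdistinct' : A'' ≠ A ∧ A'' ≠ B ∧ A'' ≠ C ∧ B'' ≠ A ∧ B'' ≠ B ∧ B'' ≠ C ∧
      C'' ≠ A ∧ C'' ≠ B ∧ C'' ≠ C)
    (S : Projectivization ℝ (Fin 3 → ℝ)) (hSline : Collin P Q S)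
    (hS : Collin A A'' S ∧ Collin B B'' S ∧ Collin C C'' S) :
    (∃ T : Projectivization ℝ (Fin 3 → ℝ), Collin P Q T ∧
      Collin A B'' T ∧ Collin B C'' T ∧ Collin C A'' T) ∧
    (∃ U : Projectivization ℝ (Fin 3 → ℝ), Collin P Q U ∧
      Collin A C'' U ∧ Collin B A'' U ∧ Collin C B'' U) := by
  classical
  obtain ⟨hP1, hP2, hP3⟩ := hP
  obtain ⟨hQ1, hQ2, hQ3⟩ := hQ
  obtain ⟨hS1, hS2, hS3⟩ := hS
  obtain ⟨hd1, hd2, hd3, hd4, hd5, hd6, hd7, hd8, hd9⟩ := hdistinct'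
  simp only [List.pairwise_cons, List.mem_cons, List.mem_singleton, List.not_mem_nil,
    forall_eq_or_imp, forall_eq, List.Pairwise.nil, and_true] at hdistinct
  obtain ⟨⟨hAB, hAC, hAA', hAB', hAC', -⟩, ⟨hBC, hBA', hBB', hBC', -⟩,
    ⟨hCA', hCB', hCC', -⟩, ⟨hA'B', hA'C', -⟩, ⟨hB'C', -⟩, -⟩ := hdistinct
  -- abbreviations for the three base representatives
  have hqa0 : q A.rep = 0 := hA
  have hqb0 : q B.rep = 0 := hB
  have hqc0 : q C.rep = 0 := hC
  have hABCind : LinearIndependent ℝ ![A.rep, B.rep, C.rep] := not_not.mp hABC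
  set Bl := QuadraticMap.polarBilin q with hBl
  have hBl_app : ∀ x y, Bl x y = q (x + y) - q x - q y := by
    intro x y
    rw [hBl, QuadraticMap.polarBilin_apply_apply, QuadraticMap.polar]
  have hBl_comm : ∀ x y, Bl x y = Bl y x := by
    intro x y; rw [hBl_app, hBl_app, add_comm]; ring
  have hBl_self : ∀ x, Bl x x = 2 * q x := by
    intro x
    rw [hBl_app]
    have h2 : x + x = (2:ℝ) • x := by module
    rw [h2, QuadraticMap.map_smul, smul_eq_mul]
    ring
  have hcard : Fintype.card (Fin 3) = Module.finrank ℝ (Fin 3 → ℝ) := by simp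
  let bas3 := basisOfLinearIndependentOfCardEqFinrank hABCind hcard
  have hbas3c : ⇑bas3 = ![A.rep, B.rep, C.rep] :=
    coe_basisOfLinearIndependentOfCardEqFinrank hABCind hcard
  have hbas3 : ∀ i, bas3 i = ![A.rep, B.rep, C.rep] i := fun i => congrFun hbas3c i
  have radical_zero : ∀ v : Fin 3 → ℝ,
      Bl v A.rep = 0 → Bl v B.rep = 0 → Bl v C.rep = 0 → v = 0 := by
    intro v h1 h2 h3
    apply hq.1
    intro n
    have hlin : Bl v = 0 := by
      apply bas3.ext
      intro i
      fin_cases i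
      · rw [hbas3]; simpa using h1
      · rw [hbas3]; simpa using h2
      · rw [hbas3]
        show Bl v C.rep = (0 : (Fin 3 → ℝ) →ₗ[ℝ] ℝ) C.rep
        simpa using h3
    rw [hlin]
    simp
  set s := Bl A.rep B.rep with hs_def
  set p := Bl A.rep C.rep with hp_def
  set r := Bl B.rep C.rep with hr_def
  have hBaa : Bl A.rep A.rep = 0 := by rw [hBl_self, hqa0]; ring
  have hBbb : Bl B.rep B.rep = 0 := by rw [hBl_self, hqb0]; ring
  have hBcc : Bl C.rep C.rep = 0 := by rw [hBl_self, hqc0]; ring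
  -- s ≠ 0
  have hs : s ≠ 0 := by
    intro hs0
    have hv0 : r • A.rep - p • B.rep = 0 := by
      apply radical_zero
      · rw [map_sub, LinearMap.map_smul, LinearMap.map_smul]
        simp only [LinearMap.sub_apply, LinearMap.smul_apply, smul_eq_mul]
        rw [hBaa, hBl_comm B.rep A.rep, ← hs_def, hs0]
        ring
      · rw [map_sub, LinearMap.map_smul, LinearMap.map_smul]
        simp only [LinearMap.sub_apply, LinearMap.smul_apply, smul_eq_mul]
        rw [hBbb, ← hs_def, hs0]
        ring
      · rw [map_sub, LinearMap.map_smul, LinearMap.map_smul]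
        simp only [LinearMap.sub_apply, LinearMap.smul_apply, smul_eq_mul]
        rw [← hp_def, ← hr_def]
        ring
    have hco := Fintype.linearIndependent_iff.mp hABCind ![r, -p, 0] (by
      simp only [Fin.sum_univ_three, Matrix.cons_val_zero, Matrix.cons_val_one,
        Matrix.head_cons, Matrix.cons_val_two, Matrix.tail_cons, zero_smul, add_zero,
        neg_smul]
      linear_combination (norm := module) hv0)
    have hr0 : r = 0 := by simpa using hco 0
    have hp0 : p = 0 := by
      have := hco 1
      simp at this
      exact this
    have hcrad : C.rep = 0 := by
      apply radical_zero
      · rw [hBl_comm, ← hp_def, hp0]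
      · rw [hBl_comm, ← hr_def, hr0]
      · exact hBcc
    exact C.rep_nonzero hcrad
  -- the adapted third basis vector
  set e3 := C.rep - (r / s) • A.rep - (p / s) • B.rep with he3_def
  have hBe3a : Bl e3 A.rep = 0 := by
    rw [he3_def, map_sub, map_sub, LinearMap.map_smul, LinearMap.map_smul]
    simp only [LinearMap.sub_apply, LinearMap.smul_apply, smul_eq_mul]
    rw [hBaa, hBl_comm C.rep A.rep, ← hp_def, hBl_comm B.rep A.rep, ← hs_def]
    field_simp
    ring
  have hBe3b : Bl e3 B.rep = 0 := by
    rw [he3_def, map_sub, map_sub, LinearMap.map_smul, LinearMap.map_smul]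
    simp only [LinearMap.sub_apply, LinearMap.smul_apply, smul_eq_mul]
    rw [hBbb, hBl_comm C.rep B.rep, ← hr_def, ← hs_def]
    field_simp
    ring
  have he3ind : LinearIndependent ℝ ![A.rep, B.rep, e3] := by
    rw [Fintype.linearIndependent_iff]
    intro g hg
    rw [Fin.sum_univ_three] at hg
    simp only [Matrix.cons_val_zero, Matrix.cons_val_one, Matrix.head_cons,
      Matrix.cons_val_two, Matrix.tail_cons] at hg
    rw [he3_def] at hg
    have hg' : (g 0 - g 2 * (r/s)) • A.rep + (g 1 - g 2 * (p/s)) • B.rep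
        + (g 2) • C.rep = 0 := by
      linear_combination (norm := module) hg
    have hco := Fintype.linearIndependent_iff.mp hABCind
      ![g 0 - g 2 * (r/s), g 1 - g 2 * (p/s), g 2] (by
        simpa [Fin.sum_univ_three] using hg')
    have h2 : g 2 = 0 := by simpa using hco 2
    intro i
    fin_cases i
    · have h0 := hco 0
      simp only [Matrix.cons_val_zero] at h0
      rw [h2] at h0
      simpa using h0
    · have h1 := hco 1
      simp only [Matrix.cons_val_one, Matrix.head_cons] at h1
      rw [h2] at h1
      simpa using h1
    · exact h2
  have he3ne : e3 ≠ 0 := by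
    intro h0
    have := Fintype.linearIndependent_iff.mp he3ind ![0, 0, 1] (by
      simp [Fin.sum_univ_three, h0])
    simpa using this 2
  set t := q e3 with ht_def
  have hBe3e3 : Bl e3 e3 = 2 * t := by rw [hBl_self, ht_def]
  have ht : t ≠ 0 := by
    intro ht0
    apply he3ne
    apply radical_zero
    · exact hBe3a
    · exact hBe3b
    · have hc0 : C.rep = e3 + (r / s) • A.rep + (p / s) • B.rep := by
        rw [he3_def]; abel
      rw [hc0, map_add, map_add, LinearMap.map_smul, LinearMap.map_smul]
      simp only [LinearMap.smul_apply, smul_eq_mul]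
      rw [hBe3e3, ht0, hBe3a, hBe3b]
      ring
  -- the adapted basis and the linear map to 2x2 matrices
  let bas := basisOfLinearIndependentOfCardEqFinrank he3ind hcard
  have hbasc : ⇑bas = ![A.rep, B.rep, e3] :=
    coe_basisOfLinearIndependentOfCardEqFinrank he3ind hcard
  have hbas0 : bas 0 = A.rep := by rw [hbasc]; rfl
  have hbas1 : bas 1 = B.rep := by rw [hbasc]; rfl
  have hbas2 : bas 2 = e3 := by rw [hbasc]; rfl
  let Φ : (Fin 3 → ℝ) →ₗ[ℝ] Matrix (Fin 2) (Fin 2) ℝ :=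
    { toFun := fun u => !![bas.repr u 2, (s / t) * bas.repr u 0;
        bas.repr u 1, -(bas.repr u 2)]
      map_add' := by
        intro u v
        ext i j
        fin_cases i <;> fin_cases j <;>
          · simp [map_add, Matrix.add_apply]
            try ring
      map_smul' := by
        intro c u
        ext i j
        fin_cases i <;> fin_cases j <;>
          · simp [_root_.map_smul, Matrix.smul_apply]
            try ring }
  have hΦ_apply : ∀ u, Φ u = !![bas.repr u 2, (s / t) * bas.repr u 0;
      bas.repr u 1, -(bas.repr u 2)] := fun u => rfl
  have hΦtr : ∀ u : Fin 3 → ℝ, (Φ u) 1 1 = -((Φ u) 0 0) := by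
    intro u
    rw [hΦ_apply]
    simp
  have hΦker : LinearMap.ker Φ = ⊥ := by
    rw [LinearMap.ker_eq_bot']
    intro u hu
    rw [hΦ_apply] at hu
    have h00 : bas.repr u 2 = 0 := by
      have := congrFun (congrFun hu 0) 0
      simpa using this
    have h10 : bas.repr u 1 = 0 := by
      have := congrFun (congrFun hu 1) 0
      simpa using this
    have h01 : bas.repr u 0 = 0 := by
      have h := congrFun (congrFun hu 0) 1
      simp only [Matrix.cons_val', Matrix.cons_val_zero, Matrix.cons_val_one,
        Matrix.head_cons, Matrix.empty_val', Matrix.cons_val_fin_one,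
        Matrix.head_fin_const, Matrix.of_apply, Matrix.zero_apply] at h
      have hst : s / t ≠ 0 := div_ne_zero hs ht
      rcases mul_eq_zero.mp h with h' | h'
      · exact absurd h' hst
      · exact h'
    have hrz : bas.repr u = 0 := by
      ext i
      fin_cases i
      · exact h01
      · exact h10
      · exact h00
    have := congrArg (fun f => bas.repr.symm f) hrz
    simpa using this
  have hΦinj : Function.Injective Φ := LinearMap.ker_eq_bot.mp hΦker
  have hΦne : ∀ u : Fin 3 → ℝ, u ≠ 0 → Φ u ≠ 0 := by
    intro u hu h0
    apply hu
    apply hΦinj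
    rw [h0, map_zero]
  -- the quadratic form in terms of Φ
  have hq_det : ∀ u : Fin 3 → ℝ, q u = (-t) * (Φ u).det := by
    intro u
    have hu := bas.sum_repr u
    rw [Fin.sum_univ_three, hbas0, hbas1, hbas2] at hu
    set x := bas.repr u 0 with hx
    set y := bas.repr u 1 with hy
    set z := bas.repr u 2 with hz
    have hqxy : q (x • A.rep + y • B.rep) = s * (x * y) := by
      have hBxy : Bl (x • A.rep) (y • B.rep) = x * (y * s) := by
        simp only [_root_.map_smul, LinearMap.smul_apply, smul_eq_mul]
        rw [← hs_def]
        ring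
      have h1 : q (x • A.rep + y • B.rep)
          = q (x • A.rep) + q (y • B.rep) + Bl (x • A.rep) (y • B.rep) := by
        rw [hBl_app]
        ring
      rw [QuadraticMap.map_smul, QuadraticMap.map_smul, hqa0, hqb0, hBxy] at h1
      rw [h1]
      simp only [smul_eq_mul, smul_eq_mul, smul_zero]
      ring
    have hqu : q u = s * (x * y) + t * z ^ 2 := by
      have hsplit := hBl_app (x • A.rep + y • B.rep) (z • e3)
      have hBz : Bl (x • A.rep + y • B.rep) (z • e3) = 0 := by
        simp only [map_add, _root_.map_smul, LinearMap.add_apply,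
          LinearMap.smul_apply, smul_eq_mul]
        rw [hBl_comm A.rep e3, hBe3a, hBl_comm B.rep e3, hBe3b]
        ring
      have hqz : q (z • e3) = z ^ 2 * t := by
        rw [QuadraticMap.map_smul, ← ht_def]
        simp only [smul_eq_mul, smul_eq_mul]
        ring
      have hcomb : q (x • A.rep + y • B.rep + z • e3)
          = q (x • A.rep + y • B.rep) + q (z • e3)
            + Bl (x • A.rep + y • B.rep) (z • e3) := by
        rw [hsplit]
        ring
      rw [← hu, hcomb, hqxy, hqz, hBz]
      ring
    have hdet : (Φ u).det = -(z ^ 2) - (s / t) * (x * y) := by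
      rw [hΦ_apply, Matrix.det_fin_two]
      simp only [Matrix.cons_val', Matrix.cons_val_zero, Matrix.cons_val_one,
        Matrix.head_cons, Matrix.empty_val', Matrix.cons_val_fin_one,
        Matrix.head_fin_const, Matrix.of_apply]
      rw [← hx, ← hy, ← hz]
      ring
    rw [hqu, hdet]
    field_simp
    ring
  -- conic points have singular trace-free matrices
  have hdet0 : ∀ X : Projectivization ℝ (Fin 3 → ℝ), OnConic q X → (Φ X.rep).det = 0 := by
    intro X hX0
    have h := hq_det X.rep
    rw [hX0] at h
    rcases mul_eq_zero.mp h.symm with h' | h'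
    · exact absurd (neg_eq_zero.mp h') ht
    · exact h'
  have hΦrepne : ∀ X : Projectivization ℝ (Fin 3 → ℝ), Φ X.rep ≠ 0 :=
    fun X => hΦne X.rep X.rep_nonzero
  -- independence transfer
  have pairIndRep : ∀ X Y : Projectivization ℝ (Fin 3 → ℝ), X ≠ Y →
      LinearIndependent ℝ ![X.rep, Y.rep] := by
    intro X Y hXY
    have h1 := (Projectivization.independent_pair_iff_ne X Y).mpr hXY
    rw [Projectivization.independent_iff] at h1
    have h2 : (Projectivization.rep ∘ ![X, Y]) = ![X.rep, Y.rep] := by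
      funext i; fin_cases i <;> simp
    rwa [h2] at h1
  have pairInd : ∀ X Y : Projectivization ℝ (Fin 3 → ℝ), X ≠ Y →
      LinearIndependent ℝ ![Φ X.rep, Φ Y.rep] := by
    intro X Y hXY
    have h1 := (pairIndRep X Y hXY).map' Φ hΦker
    have h2 : (⇑Φ ∘ ![X.rep, Y.rep]) = ![Φ X.rep, Φ Y.rep] := by
      funext i; fin_cases i <;> simp
    rwa [h2] at h1
  have collinSpanM : ∀ X Y Z : Projectivization ℝ (Fin 3 → ℝ), X ≠ Y → Collin X Y Z →
      ∃ x y : ℝ, Φ Z.rep = x • Φ X.rep + y • Φ Y.rep := by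
    intro X Y Z hXY hcol
    obtain ⟨x, y, h⟩ := comb_of_dep X.rep Y.rep Z.rep hcol (pairIndRep X Y hXY)
    exact ⟨x, y, by rw [h, map_add, _root_.map_smul, _root_.map_smul]⟩
  have collinOfComb : ∀ X Y Z : Projectivization ℝ (Fin 3 → ℝ),
      (∃ x y : ℝ, Φ Z.rep = x • Φ X.rep + y • Φ Y.rep) → Collin X Y Z := by
    rintro X Y Z ⟨x, y, h⟩
    show ¬ LinearIndependent ℝ ![X.rep, Y.rep, Z.rep]
    intro hLI
    have h1 := hLI.map' Φ hΦker
    have h2 : (⇑Φ ∘ ![X.rep, Y.rep, Z.rep]) = ![Φ X.rep, Φ Y.rep, Φ Z.rep] := by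
      funext i; fin_cases i <;> simp
    rw [h2] at h1
    exact dep_of_comb _ _ _ x y h h1
  -- structure of conic points
  obtain ⟨vA, cA, hvA, hcA, hNA⟩ :=
    struct (Φ A.rep) (hΦrepne A) (hΦtr A.rep) (hdet0 A hA)
  obtain ⟨vB, cB, hvB, hcB, hNB⟩ :=
    struct (Φ B.rep) (hΦrepne B) (hΦtr B.rep) (hdet0 B hB)
  obtain ⟨vC, cC, hvC, hcC, hNC⟩ :=
    struct (Φ C.rep) (hΦrepne C) (hΦtr C.rep) (hdet0 C hC)
  obtain ⟨vA', cA', hvA', hcA', hNA'⟩ :=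
    struct (Φ A'.rep) (hΦrepne A') (hΦtr A'.rep) (hdet0 A' hA')
  obtain ⟨vB', cB', hvB', hcB', hNB'⟩ :=
    struct (Φ B'.rep) (hΦrepne B') (hΦtr B'.rep) (hdet0 B' hB')
  obtain ⟨vC', cC', hvC', hcC', hNC'⟩ :=
    struct (Φ C'.rep) (hΦrepne C') (hΦtr C'.rep) (hdet0 C' hC')
  obtain ⟨vA'', cA'', hvA'', hcA'', hNA''⟩ :=
    struct (Φ A''.rep) (hΦrepne A'') (hΦtr A''.rep) (hdet0 A'' hA'')
  obtain ⟨vB'', cB'', hvB'', hcB'', hNB''⟩ :=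
    struct (Φ B''.rep) (hΦrepne B'') (hΦtr B''.rep) (hdet0 B'' hB'')
  obtain ⟨vC'', cC'', hvC'', hcC'', hNC''⟩ :=
    struct (Φ C''.rep) (hΦrepne C'') (hΦtr C''.rep) (hdet0 C'' hC'')
  -- nonvanishing of the bracket for distinct conic points
  have dltNE : ∀ (X Y : Projectivization ℝ (Fin 3 → ℝ)) (vX vY : Fin 2 → ℝ)
      (cX cY : ℝ), X ≠ Y → Φ X.rep = cX • Rmat vX → Φ Y.rep = cY • Rmat vY →
      cX ≠ 0 → vX ≠ 0 → dlt vX vY ≠ 0 := by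
    intro X Y vX vY cX cY hXY hX hY hcX hvX
    exact dlt_ne_of_indep (Φ X.rep) (Φ Y.rep) vX vY cX cY hX hY hcX hvX
      (pairInd X Y hXY)
  have dAA' := dltNE A A' vA vA' cA cA' hAA' hNA hNA' hcA hvA
  have dAB := dltNE A B vA vB cA cB hAB hNA hNB hcA hvA
  have dAB' := dltNE A B' vA vB' cA cB' hAB' hNA hNB' hcA hvA
  have dA'B := dltNE A' B vA' vB cA' cB (Ne.symm hBA') hNA' hNB hcA' hvA'
  have dA'B' := dltNE A' B' vA' vB' cA' cB' hA'B' hNA' hNB' hcA' hvA'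
  have dAC' := dltNE A C' vA vC' cA cC' hAC' hNA hNC' hcA hvA
  have dB'B := dltNE B' B vB' vB cB' cB (Ne.symm hBB') hNB' hNB hcB' hvB'
  have dB'C' := dltNE B' C' vB' vC' cB' cC' hB'C' hNB' hNC' hcB' hvB'
  have dB''A := dltNE B'' A vB'' vA cB'' cA hd4 hNB'' hNA hcB'' hvB''
  have dC''B := dltNE C'' B vC'' vB cC'' cB hd8 hNC'' hNB hcC'' hvC''
  have dA''C := dltNE A'' C vA'' vC cA'' cC hd3 hNA'' hNC hcA'' hvA''
  have dC''A := dltNE C'' A vC'' vA cC'' cA hd7 hNC'' hNA hcC'' hvC''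
  have dA''B := dltNE A'' B vA'' vB cA'' cB hd2 hNA'' hNB hcA'' hvA''
  have dB''C := dltNE B'' C vB'' vC cB'' cC hd6 hNB'' hNC hcB'' hvB''
  -- span data from the collinearity hypotheses
  have spanR : ∀ (X Y Z : Projectivization ℝ (Fin 3 → ℝ)) (vX vY : Fin 2 → ℝ)
      (cX cY : ℝ), X ≠ Y → Collin X Y Z → Φ X.rep = cX • Rmat vX →
      Φ Y.rep = cY • Rmat vY →
      ∃ x y : ℝ, Φ Z.rep = x • Rmat vX + y • Rmat vY := by
    intro X Y Z vX vY cX cY hXY hcol hX hY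
    obtain ⟨x, y, h⟩ := collinSpanM X Y Z hXY hcol
    exact ⟨x * cX, y * cY, by rw [h, hX, hY, smul_smul, smul_smul]⟩
  obtain ⟨P1, P2, hPaa'⟩ := spanR A A' P vA vA' cA cA' hAA' hP1 hNA hNA'
  obtain ⟨P3, P4, hPbb'⟩ := spanR B B' P vB vB' cB cB' hBB' hP2 hNB hNB'
  obtain ⟨P5, P6, hPcc'⟩ := spanR C C' P vC vC' cC cC' hCC' hP3 hNC hNC'
  obtain ⟨Q1, Q2, hQab'⟩ := spanR A B' Q vA vB' cA cB' hAB' hQ1 hNA hNB'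
  obtain ⟨Q3, Q4, hQbc'⟩ := spanR B C' Q vB vC' cB cC' hBC' hQ2 hNB hNC'
  obtain ⟨Q5, Q6, hQca'⟩ := spanR C A' Q vC vA' cC cA' hCA' hQ3 hNC hNA'
  obtain ⟨S1, S2, hSaa''⟩ := spanR A A'' S vA vA'' cA cA'' (Ne.symm hd1) hS1 hNA hNA''
  obtain ⟨S3, S4, hSbb''⟩ := spanR B B'' S vB vB'' cB cB'' (Ne.symm hd5) hS2 hNB hNB''
  obtain ⟨S5, S6, hScc''⟩ := spanR C C'' S vC vC'' cC cC'' (Ne.symm hd9) hS3 hNC hNC''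
  obtain ⟨αS, βS, hSPQ⟩ := collinSpanM P Q S hPQ hSline
  -- trace conditions
  have hMPtr := hΦtr P.rep
  have hMQtr := hΦtr Q.rep
  -- nonzero determinants of P and Q matrices
  have hMPdet : (Φ P.rep).det ≠ 0 :=
    det_ne_of_two_spans (Φ P.rep) vA vA' vB vB' P1 P2 P3 P4 hPaa' hPbb'
      (hΦrepne P) dAA' dAB dAB' dA'B dA'B'
  have hMQdet : (Φ Q.rep).det ≠ 0 :=
    det_ne_of_two_spans (Φ Q.rep) vA vB' vB vC' Q1 Q2 Q3 Q4 hQab' hQbc'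
      (hΦrepne Q) dAB' dAB dAC' dB'B dB'C'
  -- the matrix of T
  have hMT : Φ S.rep * Φ P.rep * Φ Q.rep
      = (βS * (Φ Q.rep).det) • Φ P.rep
        + (βS * ((Φ P.rep * Φ Q.rep).trace) - αS * (Φ P.rep).det) • Φ Q.rep := by
    rw [hSPQ]
    exact keyspan (Φ P.rep) (Φ Q.rep) hMPtr hMQtr αS βS
  have hPQdet : (Φ P.rep * Φ Q.rep).det ≠ 0 := by
    rw [Matrix.det_mul]
    exact mul_ne_zero hMPdet hMQdet
  have hPQunit : IsUnit (Φ P.rep * Φ Q.rep).det := isUnit_iff_ne_zero.mpr hPQdet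
  have hMTne : Φ S.rep * Φ P.rep * Φ Q.rep ≠ 0 := by
    intro h0
    apply hΦrepne S
    calc Φ S.rep = Φ S.rep * ((Φ P.rep * Φ Q.rep) * (Φ P.rep * Φ Q.rep)⁻¹) := by
          rw [Matrix.mul_nonsing_inv _ hPQunit, mul_one]
      _ = (Φ S.rep * Φ P.rep * Φ Q.rep) * (Φ P.rep * Φ Q.rep)⁻¹ := by
          rw [← mul_assoc, ← mul_assoc]
      _ = 0 := by rw [h0, zero_mul]
  have hMTtr : (Φ S.rep * Φ P.rep * Φ Q.rep) 1 1
      = -((Φ S.rep * Φ P.rep * Φ Q.rep) 0 0) := by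
    rw [hMT]
    simp only [Matrix.add_apply, Matrix.smul_apply, smul_eq_mul, hMPtr, hMQtr]
    ring
  -- chains for MT
  obtain ⟨κ1, hκ1⟩ := tri_chain (Φ S.rep) (Φ P.rep) (Φ Q.rep) vA vB' vB vB''
    S3 S4 P3 P4 Q1 Q2 hQab' hPbb' hSbb''
  obtain ⟨κ2, hκ2⟩ := tri_chain (Φ S.rep) (Φ P.rep) (Φ Q.rep) vB vC' vC vC''
    S5 S6 P5 P6 Q3 Q4 hQbc' hPcc' hScc''
  obtain ⟨κ3, hκ3⟩ := tri_chain (Φ S.rep) (Φ P.rep) (Φ Q.rep) vC vA' vA vA''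
    S1 S2 P1 P2 Q5 Q6 hQca' hPaa' hSaa''
  -- spans of MT
  obtain ⟨x1, y1, hMTab''⟩ := span_of_mulVec (Φ S.rep * Φ P.rep * Φ Q.rep)
    vA vB'' κ1 hMTtr hκ1 dB''A
  obtain ⟨x2, y2, hMTbc''⟩ := span_of_mulVec (Φ S.rep * Φ P.rep * Φ Q.rep)
    vB vC'' κ2 hMTtr hκ2 dC''B
  obtain ⟨x3, y3, hMTca''⟩ := span_of_mulVec (Φ S.rep * Φ P.rep * Φ Q.rep)
    vC vA'' κ3 hMTtr hκ3 dA''C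
  -- the point T
  set tc1 := βS * (Φ Q.rep).det with htc1
  set tc2 := βS * ((Φ P.rep * Φ Q.rep).trace) - αS * (Φ P.rep).det with htc2
  set wT := tc1 • P.rep + tc2 • Q.rep with hwT
  have hΦwT : Φ wT = Φ S.rep * Φ P.rep * Φ Q.rep := by
    rw [hwT, map_add, _root_.map_smul, _root_.map_smul, hMT]
  have hwTne : wT ≠ 0 := by
    intro h0
    apply hMTne
    rw [← hΦwT, h0, map_zero]
  set T := Projectivization.mk ℝ wT hwTne with hT
  have hmkT : Projectivization.mk ℝ T.rep T.rep_nonzero = Projectivization.mk ℝ wT hwTne := by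
    rw [Projectivization.mk_rep, hT]
  obtain ⟨uT, huT⟩ := (Projectivization.mk_eq_mk_iff ℝ _ _ _ _).mp hmkT
  have hTrep : T.rep = (uT : ℝ) • wT := by rw [← huT, Units.smul_def]
  have huTne : (uT : ℝ) ≠ 0 := Units.ne_zero uT
  have hΦTrep : Φ T.rep = (uT : ℝ) • (Φ S.rep * Φ P.rep * Φ Q.rep) := by
    rw [hTrep, _root_.map_smul, hΦwT]
  -- the matrix of U
  set MU := (Φ S.rep * Φ P.rep * Φ Q.rep) * Φ P.rep * Φ Q.rep with hMUdef
  have hMTspanPQ : Φ S.rep * Φ P.rep * Φ Q.rep = tc1 • Φ P.rep + tc2 • Φ Q.rep := hMT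
  have hMU : MU = (tc2 * (Φ Q.rep).det) • Φ P.rep
      + (tc2 * ((Φ P.rep * Φ Q.rep).trace) - tc1 * (Φ P.rep).det) • Φ Q.rep := by
    rw [hMUdef, hMTspanPQ]
    exact keyspan (Φ P.rep) (Φ Q.rep) hMPtr hMQtr tc1 tc2
  have hMUne : MU ≠ 0 := by
    intro h0
    apply hMTne
    calc Φ S.rep * Φ P.rep * Φ Q.rep
        = (Φ S.rep * Φ P.rep * Φ Q.rep) * ((Φ P.rep * Φ Q.rep) * (Φ P.rep * Φ Q.rep)⁻¹) := by
          rw [Matrix.mul_nonsing_inv _ hPQunit, mul_one]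
      _ = MU * (Φ P.rep * Φ Q.rep)⁻¹ := by
          rw [hMUdef, ← mul_assoc, ← mul_assoc]
      _ = 0 := by rw [h0, zero_mul]
  have hMUtr : MU 1 1 = -(MU 0 0) := by
    rw [hMU]
    simp only [Matrix.add_apply, Matrix.smul_apply, smul_eq_mul, hMPtr, hMQtr]
    ring
  -- chains for MU
  obtain ⟨lam1, hlam1⟩ := tri_chain (Φ S.rep * Φ P.rep * Φ Q.rep) (Φ P.rep) (Φ Q.rep)
    vA vB' vB vC'' x2 y2 P3 P4 Q1 Q2 hQab' hPbb' hMTbc''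
  obtain ⟨lam2, hlam2⟩ := tri_chain (Φ S.rep * Φ P.rep * Φ Q.rep) (Φ P.rep) (Φ Q.rep)
    vB vC' vC vA'' x3 y3 P5 P6 Q3 Q4 hQbc' hPcc' hMTca''
  obtain ⟨lam3, hlam3⟩ := tri_chain (Φ S.rep * Φ P.rep * Φ Q.rep) (Φ P.rep) (Φ Q.rep)
    vC vA' vA vB'' x1 y1 P1 P2 Q5 Q6 hQca' hPaa' hMTab''
  have hlam1' : MU *ᵥ vA = lam1 • vC'' := by rw [hMUdef]; exact hlam1
  have hlam2' : MU *ᵥ vB = lam2 • vA'' := by rw [hMUdef]; exact hlam2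
  have hlam3' : MU *ᵥ vC = lam3 • vB'' := by rw [hMUdef]; exact hlam3
  -- spans of MU
  obtain ⟨z1, w1, hMUac''⟩ := span_of_mulVec MU vA vC'' lam1 hMUtr hlam1' dC''A
  obtain ⟨z2, w2, hMUba''⟩ := span_of_mulVec MU vB vA'' lam2 hMUtr hlam2' dA''B
  obtain ⟨z3, w3, hMUcb''⟩ := span_of_mulVec MU vC vB'' lam3 hMUtr hlam3' dB''C
  -- the point U
  set uc1 := tc2 * (Φ Q.rep).det with huc1
  set uc2 := tc2 * ((Φ P.rep * Φ Q.rep).trace) - tc1 * (Φ P.rep).det with huc2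
  set wU := uc1 • P.rep + uc2 • Q.rep with hwU
  have hΦwU : Φ wU = MU := by
    rw [hwU, map_add, _root_.map_smul, _root_.map_smul, hMU]
  have hwUne : wU ≠ 0 := by
    intro h0
    apply hMUne
    rw [← hΦwU, h0, map_zero]
  set U := Projectivization.mk ℝ wU hwUne with hU
  have hmkU : Projectivization.mk ℝ U.rep U.rep_nonzero = Projectivization.mk ℝ wU hwUne := by
    rw [Projectivization.mk_rep, hU]
  obtain ⟨uU, huU⟩ := (Projectivization.mk_eq_mk_iff ℝ _ _ _ _).mp hmkU
  have hUrep : U.rep = (uU : ℝ) • wU := by rw [← huU, Units.smul_def]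
  have huUne : (uU : ℝ) ≠ 0 := Units.ne_zero uU
  have hΦUrep : Φ U.rep = (uU : ℝ) • MU := by
    rw [hUrep, _root_.map_smul, hΦwU]
  -- finish
  constructor
  · refine ⟨T, ?_, ?_, ?_, ?_⟩
    · show ¬ LinearIndependent ℝ ![P.rep, Q.rep, T.rep]
      apply dep_of_comb P.rep Q.rep T.rep ((uT : ℝ) * tc1) ((uT : ℝ) * tc2)
      rw [hTrep, hwT, smul_add, smul_smul, smul_smul]
    · apply collinOfComb A B'' T
      refine ⟨(uT : ℝ) * x1 / cA, (uT : ℝ) * y1 / cB'', ?_⟩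
      rw [hΦTrep, hMTab'', hNA, hNB'', smul_add, smul_smul, smul_smul, smul_smul,
        smul_smul]
      congr 2 <;> field_simp <;> ring
    · apply collinOfComb B C'' T
      refine ⟨(uT : ℝ) * x2 / cB, (uT : ℝ) * y2 / cC'', ?_⟩
      rw [hΦTrep, hMTbc'', hNB, hNC'', smul_add, smul_smul, smul_smul, smul_smul,
        smul_smul]
      congr 2 <;> field_simp <;> ring
    · apply collinOfComb C A'' T
      refine ⟨(uT : ℝ) * x3 / cC, (uT : ℝ) * y3 / cA'', ?_⟩
      rw [hΦTrep, hMTca'', hNC, hNA'', smul_add, smul_smul, smul_smul, smul_smul,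
        smul_smul]
      congr 2 <;> field_simp <;> ring
  · refine ⟨U, ?_, ?_, ?_, ?_⟩
    · show ¬ LinearIndependent ℝ ![P.rep, Q.rep, U.rep]
      apply dep_of_comb P.rep Q.rep U.rep ((uU : ℝ) * uc1) ((uU : ℝ) * uc2)
      rw [hUrep, hwU, smul_add, smul_smul, smul_smul]
    · apply collinOfComb A C'' U
      refine ⟨(uU : ℝ) * z1 / cA, (uU : ℝ) * w1 / cC'', ?_⟩
      rw [hΦUrep, hMUac'', hNA, hNC'', smul_add, smul_smul, smul_smul, smul_smul,
        smul_smul]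
      congr 2 <;> field_simp <;> ring
    · apply collinOfComb B A'' U
      refine ⟨(uU : ℝ) * z2 / cB, (uU : ℝ) * w2 / cA'', ?_⟩
      rw [hΦUrep, hMUba'', hNB, hNA'', smul_add, smul_smul, smul_smul, smul_smul,
        smul_smul]
      congr 2 <;> field_simp <;> ring
    · apply collinOfComb C B'' U
      refine ⟨(uU : ℝ) * z3 / cC, (uU : ℝ) * w3 / cB'', ?_⟩
      rw [hΦUrep, hMUcb'', hNC, hNB'', smul_add, smul_smul, smul_smul, smul_smul,
        smul_smul]
      congr 2 <;> field_simp <;> ring
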